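/- arXiv:1707.01486 — 3 statements merged into one kernel-verified Lean document; each statement's English description precedes it below -/
import Mathlib

section
/- Let A > 0, C > 0, α > 0, and let h : [0, A) → ℝ be twice continuously differentiable with h(0) = 0, h'(0) = α/(2π), h(r) > 0 for r ∈ (0, A), and |h''(r)| ≤ C·h(r) for all r ∈ [0, A). Then there exist C' > 0 and r₀ ∈ (0, A) such that for all r ∈ (0, r₀): |h(r) − (α/(2π))·r| ≤ C'·r³ and |r·h'(r)/h(r) − 1| ≤ C'·r². -/
/-- Auxiliary: a function vanishing at `0` with nonnegative derivative on `(0,b)`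
is nonnegative on `[0,b]`. -/
lemma cone_aux_nonneg (b : ℝ) (f f' : ℝ → ℝ) (hf0 : f 0 = 0)
    (hc : ContinuousOn f (Set.Icc 0 b))
    (hd : ∀ x ∈ Set.Ioo (0 : ℝ) b, HasDerivAt f (f' x) x)
    (hnn : ∀ x ∈ Set.Ioo (0 : ℝ) b, 0 ≤ f' x) :
    ∀ x ∈ Set.Icc (0 : ℝ) b, 0 ≤ f x := by
  intro x hx
  have hmono : MonotoneOn f (Set.Icc 0 b) := by
    apply monotoneOn_of_deriv_nonneg (convex_Icc 0 b) hc
    · rw [interior_Icc]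
      exact fun y hy => ((hd y hy).differentiableAt).differentiableWithinAt
    · rw [interior_Icc]
      intro y hy
      rw [(hd y hy).deriv]
      exact hnn y hy
  have h0b : (0 : ℝ) ∈ Set.Icc (0 : ℝ) b := ⟨le_refl _, le_trans hx.1 hx.2⟩
  have := hmono h0b hx hx.1
  linarith

set_option maxHeartbeats 1000000 in
/-- Near a cone point of angle `α` with bounded curvature (`|h''| ≤ C·h`), the
warping function satisfies `h(r) = (α/2π)·r + O(r³)` and `r·h'/h − 1 = O(r²)`. -/
theorem cone_warping_asymptotics
    (A C α : ℝ) (hA : 0 < A) (hC : 0 < C) (hα : 0 < α)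
    (h h' h'' : ℝ → ℝ)
    (hd1 : ∀ r ∈ Set.Ico (0 : ℝ) A, HasDerivWithinAt h (h' r) (Set.Ico (0 : ℝ) A) r)
    (hd2 : ∀ r ∈ Set.Ico (0 : ℝ) A, HasDerivWithinAt h' (h'' r) (Set.Ico (0 : ℝ) A) r)
    (hcont : ContinuousOn h'' (Set.Ico (0 : ℝ) A))
    (h0 : h 0 = 0) (h'0 : h' 0 = α / (2 * Real.pi))
    (hpos : ∀ r ∈ Set.Ioo (0 : ℝ) A, 0 < h r)
    (hcurv : ∀ r ∈ Set.Ico (0 : ℝ) A, |h'' r| ≤ C * h r) :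
    ∃ C' > 0, ∃ r₀ ∈ Set.Ioo (0 : ℝ) A, ∀ r ∈ Set.Ioo (0 : ℝ) r₀,
      |h r - α / (2 * Real.pi) * r| ≤ C' * r ^ 3 ∧
      |r * h' r / h r - 1| ≤ C' * r ^ 2 := by
  have hπ := Real.pi_pos
  set β := α / (2 * Real.pi) with hβdef
  have hβ : 0 < β := by positivity
  set L := Real.sqrt C with hLdef
  have hL : 0 < L := Real.sqrt_pos.2 hC
  have hL2 : L ^ 2 = C := Real.sq_sqrt hC.le
  set M := β * Real.exp L with hMdef
  have hM : 0 < M := by positivity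
  set c := C * M with hcdef
  have hc : 0 < c := by positivity
  -- choice of r₀
  set r₀ := min (min (A / 2) 1) (Real.sqrt (β / c)) with hr₀def
  have hr₀pos : 0 < r₀ := by
    apply lt_min (lt_min (by linarith) one_pos)
    exact Real.sqrt_pos.2 (by positivity)
  have hr₀A : r₀ < A := lt_of_le_of_lt (le_trans (min_le_left _ _) (min_le_left _ _)) (by linarith)
  have hr₀1 : r₀ ≤ 1 := le_trans (min_le_left _ _) (min_le_right _ _)
  have hr₀sq : c * r₀ ^ 2 ≤ β := by
    have h1 : r₀ ≤ Real.sqrt (β / c) := min_le_right _ _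
    have h2 : r₀ ^ 2 ≤ β / c := by
      have := Real.sq_sqrt (show (0:ℝ) ≤ β / c by positivity)
      nlinarith [hr₀pos.le, Real.sqrt_nonneg (β / c)]
    calc c * r₀ ^ 2 ≤ c * (β / c) := by nlinarith
    _ = β := by field_simp
  -- basic facts
  have hsub : Set.Icc (0 : ℝ) r₀ ⊆ Set.Ico (0 : ℝ) A :=
    fun x hx => ⟨hx.1, lt_of_le_of_lt hx.2 hr₀A⟩
  have hsub' : Set.Ioo (0 : ℝ) r₀ ⊆ Set.Ioo (0 : ℝ) A :=
    fun x hx => ⟨hx.1, lt_trans hx.2 hr₀A⟩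
  have hDh : ∀ r ∈ Set.Ioo (0 : ℝ) A, HasDerivAt h (h' r) r := by
    intro r hr
    exact (hd1 r ⟨hr.1.le, hr.2⟩).hasDerivAt
      (Filter.mem_of_superset (Ioo_mem_nhds hr.1 hr.2) Set.Ioo_subset_Ico_self)
  have hDh' : ∀ r ∈ Set.Ioo (0 : ℝ) A, HasDerivAt h' (h'' r) r := by
    intro r hr
    exact (hd2 r ⟨hr.1.le, hr.2⟩).hasDerivAt
      (Filter.mem_of_superset (Ioo_mem_nhds hr.1 hr.2) Set.Ioo_subset_Ico_self)
  have hchA : ContinuousOn h (Set.Ico 0 A) := fun x hx => (hd1 x hx).continuousWithinAt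
  have hchA' : ContinuousOn h' (Set.Ico 0 A) := fun x hx => (hd2 x hx).continuousWithinAt
  have hch : ContinuousOn h (Set.Icc 0 r₀) := hchA.mono hsub
  have hch' : ContinuousOn h' (Set.Icc 0 r₀) := hchA'.mono hsub
  have hnn : ∀ x ∈ Set.Icc (0 : ℝ) r₀, 0 ≤ h x := by
    intro x hx
    rcases eq_or_lt_of_le hx.1 with he | he
    · rw [← he, h0]
    · exact (hpos x ⟨he, lt_of_le_of_lt hx.2 hr₀A⟩).le
  -- Step 1: Grönwall-type bound on h'
  have step1 : ∀ x ∈ Set.Icc (0 : ℝ) r₀, |h' x| ≤ M := by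
    have key := cone_aux_nonneg r₀
      (fun r => β ^ 2 - (h' r ^ 2 + C * h r ^ 2) * Real.exp (-(2 * L * r)))
      (fun r => -((2 * h' r * h'' r + C * (2 * h r * h' r)) * Real.exp (-(2 * L * r))
        + (h' r ^ 2 + C * h r ^ 2) * (Real.exp (-(2 * L * r)) * (-(2 * L)))))
      (by simp [h0, h'0, hβdef])
      (by
        apply ContinuousOn.sub continuousOn_const
        apply ContinuousOn.mul
        · exact ((hch'.pow 2).add (continuousOn_const.mul (hch.pow 2)))
        · exact (Real.continuous_exp.comp ((continuous_const.mul continuous_id).neg)).continuousOn)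
      (by
        intro x hx
        have hxA : x ∈ Set.Ioo (0 : ℝ) A := hsub' hx
        have d1 := ((hDh' x hxA).mul (hDh x hxA)).const_mul (2 : ℝ)
        have dE : HasDerivAt (fun r => h' r ^ 2 + C * h r ^ 2)
            (2 * h' x * h'' x + C * (2 * h x * h' x)) x := by
          have e1 : HasDerivAt (fun r => h' r ^ 2) (2 * h' x * h'' x) x := by
            have := (hDh' x hxA).pow 2
            simp [mul_comm, mul_assoc, mul_left_comm] at this ⊢
            exact this
          have e2 : HasDerivAt (fun r => C * h r ^ 2) (C * (2 * h x * h' x)) x := by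
            have := ((hDh x hxA).pow 2).const_mul C
            simpa [mul_comm, mul_assoc, mul_left_comm] using this
          exact e1.add e2
        have dexp : HasDerivAt (fun r => Real.exp (-(2 * L * r)))
            (Real.exp (-(2 * L * x)) * (-(2 * L))) x := by
          have : HasDerivAt (fun r : ℝ => -(2 * L * r)) (-(2 * L)) x := by
            have := ((hasDerivAt_id x).const_mul (2 * L)).neg
            simp only [mul_one] at this
            exact this
          exact this.exp
        exact ((dE.mul dexp).const_sub (β ^ 2))
      )
      (by
        intro x hx
        have hxA : x ∈ Set.Ioo (0 : ℝ) A := hsub' hx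
        have hxI : x ∈ Set.Icc (0 : ℝ) r₀ := ⟨hx.1.le, hx.2.le⟩
        have hhx : 0 ≤ h x := hnn x hxI
        have hcx := hcurv x ⟨hx.1.le, hxA.2⟩
        have he : (0 : ℝ) < Real.exp (-(2 * L * x)) := Real.exp_pos _
        have habs1 : h'' x ≤ C * h x := le_trans (le_abs_self _) hcx
        have habs2 : -(C * h x) ≤ h'' x := by
          have := neg_abs_le (h'' x); linarith
        -- want: 2 h' h'' + 2 C h h' ≤ 2 L (h'² + C h²)
        have hmain : 2 * h' x * h'' x + C * (2 * h x * h' x)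
            ≤ 2 * L * (h' x ^ 2 + C * h x ^ 2) := by
          have p1 : h' x * h'' x ≤ |h' x| * (C * h x) := by
            calc h' x * h'' x ≤ |h' x * h'' x| := le_abs_self _
            _ = |h' x| * |h'' x| := abs_mul _ _
            _ ≤ |h' x| * (C * h x) := mul_le_mul_of_nonneg_left hcx (abs_nonneg _)
          have p2 : h x * h' x ≤ h x * |h' x| :=
            mul_le_mul_of_nonneg_left (le_abs_self _) hhx
          have p3 : 0 ≤ 2 * L * (L * h x - |h' x|) ^ 2 := by positivity
          have p4 : |h' x| ^ 2 = h' x ^ 2 := sq_abs _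
          have p2' := mul_le_mul_of_nonneg_left p2 (by positivity : (0:ℝ) ≤ 2 * C)
          have q1 : 2 * h' x * h'' x + C * (2 * h x * h' x)
              ≤ 4 * C * (h x * |h' x|) := by nlinarith [p1, p2']
          have q2 : 4 * C * (h x * |h' x|) ≤ 2 * L * (h' x ^ 2 + C * h x ^ 2) := by
            rw [← hL2]
            nlinarith [p3, p4]
          linarith
        beta_reduce
        nlinarith [mul_le_mul_of_nonneg_right hmain he.le]
      )
    intro x hx
    have hk := key x hx
    beta_reduce at hk
    have hEx : h' x ^ 2 + C * h x ^ 2 ≤ β ^ 2 * Real.exp (2 * L * x) := by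
      have he : (0 : ℝ) < Real.exp (-(2 * L * x)) := Real.exp_pos _
      have : (h' x ^ 2 + C * h x ^ 2) * Real.exp (-(2 * L * x)) ≤ β ^ 2 := by linarith
      have := mul_le_mul_of_nonneg_right this (Real.exp_pos (2 * L * x)).le
      rwa [mul_assoc, ← Real.exp_add, neg_add_cancel, Real.exp_zero, mul_one] at this
    have hexp : Real.exp (2 * L * x) ≤ Real.exp L * Real.exp L := by
      rw [← Real.exp_add]
      apply Real.exp_le_exp.2
      have : x ≤ 1 := le_trans hx.2 hr₀1
      nlinarith
    have hsq : h' x ^ 2 ≤ M ^ 2 := by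
      have h1 : 0 ≤ C * h x ^ 2 := by positivity
      have : β ^ 2 * Real.exp (2 * L * x) ≤ M ^ 2 := by
        rw [hMdef]; nlinarith [Real.exp_pos L, sq_nonneg β]
      linarith
    rw [abs_le]
    constructor
    · nlinarith [sq_nonneg (h' x + M)]
    · nlinarith [sq_nonneg (h' x - M)]
  -- Step 2: h x ≤ M * x
  have step2 : ∀ x ∈ Set.Icc (0 : ℝ) r₀, h x ≤ M * x := by
    have key := cone_aux_nonneg r₀ (fun r => M * r - h r) (fun r => M - h' r)
      (by simp [h0])
      ((continuousOn_const.mul continuousOn_id).sub hch)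
      (fun x hx => by
        have := ((hasDerivAt_id x).const_mul M).sub (hDh x (hsub' hx))
        simp only [mul_one] at this
        exact this)
      (by
        intro x hx
        beta_reduce
        have := step1 x ⟨hx.1.le, hx.2.le⟩
        have := le_abs_self (h' x)
        linarith)
    intro x hx
    have := key x hx
    beta_reduce at this
    linarith
  -- Step 3: |h' x - β| ≤ c * x^2 / 2
  have step3 : ∀ x ∈ Set.Icc (0 : ℝ) r₀, |h' x - β| ≤ c * x ^ 2 / 2 := by
    have hder : ∀ x ∈ Set.Ioo (0 : ℝ) r₀, |h'' x| ≤ c * x := by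
      intro x hx
      have hxA : x ∈ Set.Ioo (0 : ℝ) A := hsub' hx
      have h1 := hcurv x ⟨hx.1.le, hxA.2⟩
      have h2 := step2 x ⟨hx.1.le, hx.2.le⟩
      calc |h'' x| ≤ C * h x := h1
      _ ≤ C * (M * x) := by nlinarith
      _ = c * x := by rw [hcdef]; ring
    have keyP := cone_aux_nonneg r₀ (fun r => c * r ^ 2 / 2 - (h' r - β))
      (fun r => c * r - h'' r)
      (by simp [h'0, hβdef])
      ((continuousOn_const.mul (continuousOn_id.pow 2)).div_const 2 |>.sub
        (hch'.sub continuousOn_const))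
      (by
        intro x hx
        have d1 : HasDerivAt (fun r : ℝ => c * r ^ 2 / 2) (c * x) x := by
          have d0 := ((hasDerivAt_pow 2 x).const_mul c).div_const 2
          refine d0.congr_deriv ?_
          push_cast
          ring
        exact d1.sub ((hDh' x (hsub' hx)).sub_const β))
      (fun x hx => by
        beta_reduce
        have := hder x hx; have := le_abs_self (h'' x); linarith)
    have keyM := cone_aux_nonneg r₀ (fun r => c * r ^ 2 / 2 + (h' r - β))
      (fun r => c * r + h'' r)
      (by simp [h'0, hβdef])
      ((continuousOn_const.mul (continuousOn_id.pow 2)).div_const 2 |>.add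
        (hch'.sub continuousOn_const))
      (by
        intro x hx
        have d1 : HasDerivAt (fun r : ℝ => c * r ^ 2 / 2) (c * x) x := by
          have d0 := ((hasDerivAt_pow 2 x).const_mul c).div_const 2
          refine d0.congr_deriv ?_
          push_cast
          ring
        exact d1.add ((hDh' x (hsub' hx)).sub_const β))
      (fun x hx => by
        beta_reduce
        have := hder x hx; have := neg_abs_le (h'' x); linarith)
    intro x hx
    have h1 := keyP x hx
    have h2 := keyM x hx
    beta_reduce at h1 h2
    rw [abs_le]
    constructor <;> linarith
  -- Step 4: |h x - β * x| ≤ c * x^3 / 6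
  have step4 : ∀ x ∈ Set.Icc (0 : ℝ) r₀, |h x - β * x| ≤ c * x ^ 3 / 6 := by
    have keyP := cone_aux_nonneg r₀ (fun r => c * r ^ 3 / 6 - (h r - β * r))
      (fun r => c * r ^ 2 / 2 - (h' r - β))
      (by simp [h0])
      ((continuousOn_const.mul (continuousOn_id.pow 3)).div_const 6 |>.sub
        (hch.sub (continuousOn_const.mul continuousOn_id)))
      (by
        intro x hx
        have d1 : HasDerivAt (fun r : ℝ => c * r ^ 3 / 6) (c * x ^ 2 / 2) x := by
          have d0 := ((hasDerivAt_pow 3 x).const_mul c).div_const 6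
          refine d0.congr_deriv ?_
          push_cast
          ring
        have d2 : HasDerivAt (fun r : ℝ => h r - β * r) (h' x - β) x := by
          have := (hDh x (hsub' hx)).sub ((hasDerivAt_id x).const_mul β)
          simp only [mul_one] at this
          exact this
        exact d1.sub d2)
      (by
        intro x hx
        beta_reduce
        have := step3 x ⟨hx.1.le, hx.2.le⟩
        have := le_abs_self (h' x - β)
        linarith)
    have keyM := cone_aux_nonneg r₀ (fun r => c * r ^ 3 / 6 + (h r - β * r))
      (fun r => c * r ^ 2 / 2 + (h' r - β))
      (by simp [h0])
      ((continuousOn_const.mul (continuousOn_id.pow 3)).div_const 6 |>.add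
        (hch.sub (continuousOn_const.mul continuousOn_id)))
      (by
        intro x hx
        have d1 : HasDerivAt (fun r : ℝ => c * r ^ 3 / 6) (c * x ^ 2 / 2) x := by
          have d0 := ((hasDerivAt_pow 3 x).const_mul c).div_const 6
          refine d0.congr_deriv ?_
          push_cast
          ring
        have d2 : HasDerivAt (fun r : ℝ => h r - β * r) (h' x - β) x := by
          have := (hDh x (hsub' hx)).sub ((hasDerivAt_id x).const_mul β)
          simp only [mul_one] at this
          exact this
        exact d1.add d2)
      (by
        intro x hx
        beta_reduce
        have := step3 x ⟨hx.1.le, hx.2.le⟩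
        have := neg_abs_le (h' x - β)
        linarith)
    intro x hx
    have h1 := keyP x hx
    have h2 := keyM x hx
    beta_reduce at h1 h2
    rw [abs_le]
    constructor <;> linarith
  -- conclusion
  refine ⟨c + 4 * c / (3 * β) + 1, by positivity, r₀, ⟨hr₀pos, hr₀A⟩, ?_⟩
  intro r hr
  have hrI : r ∈ Set.Icc (0 : ℝ) r₀ := ⟨hr.1.le, hr.2.le⟩
  have hrpos : 0 < r := hr.1
  have h4 := step4 r hrI
  have h3 := step3 r hrI
  have hrsq : c * r ^ 2 ≤ β := by
    have : r ^ 2 ≤ r₀ ^ 2 := by nlinarith [hr.2, hrpos]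
    nlinarith
  -- lower bound on h r
  have hlow : β / 2 * r ≤ h r := by
    have := neg_abs_le (h r - β * r)
    have : β * r - c * r ^ 3 / 6 ≤ h r := by linarith
    nlinarith
  have hhr : 0 < h r := hpos r (hsub' hr)
  constructor
  · calc |h r - β * r| ≤ c * r ^ 3 / 6 := h4
    _ ≤ (c + 4 * c / (3 * β) + 1) * r ^ 3 := by
      have : 0 ≤ 4 * c / (3 * β) := by positivity
      nlinarith [pow_pos hrpos 3]
  · have hnum : |r * h' r - h r| ≤ 2 * c / 3 * r ^ 3 := by
      have e : r * h' r - h r = r * (h' r - β) - (h r - β * r) := by ring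
      rw [e]
      calc |r * (h' r - β) - (h r - β * r)|
          ≤ |r * (h' r - β)| + |h r - β * r| := abs_sub _ _
      _ = r * |h' r - β| + |h r - β * r| := by
          rw [abs_mul, abs_of_pos hrpos]
      _ ≤ r * (c * r ^ 2 / 2) + c * r ^ 3 / 6 := by
          have := abs_nonneg (h' r - β)
          nlinarith
      _ = 2 * c / 3 * r ^ 3 := by ring
    have e2 : r * h' r / h r - 1 = (r * h' r - h r) / h r := by
      field_simp
    rw [e2, abs_div, abs_of_pos hhr, div_le_iff₀ hhr]
    have hβne : β ≠ 0 := ne_of_gt hβ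
    have k0 : (c + 4 * c / (3 * β) + 1) * r ^ 2 * (β / 2 * r)
        = (c + 1) * (β / 2) * r ^ 3 + 2 * c / 3 * r ^ 3 := by
      field_simp
      ring
    have k1 : 2 * c / 3 * r ^ 3 ≤ (c + 4 * c / (3 * β) + 1) * r ^ 2 * (β / 2 * r) := by
      have : 0 ≤ (c + 1) * (β / 2) * r ^ 3 := by positivity
      linarith
    have k2 : (c + 4 * c / (3 * β) + 1) * r ^ 2 * (β / 2 * r)
        ≤ (c + 4 * c / (3 * β) + 1) * r ^ 2 * h r :=
      mul_le_mul_of_nonneg_left hlow (by positivity)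
    linarith
end

section
/- Let Λ > 0, R > 0, and let h : [0, R] → ℝ be twice continuously differentiable with h(0) = 0, 0 < h'(0) ≤ 1, h(r) ≥ 0 and h''(r) ≤ Λ·h(r) for all r ∈ [0, R]. Then h(r) ≤ sinh(√Λ·r)/√Λ for all r ∈ [0, R]. -/
/-- Comparison estimate with hyperbolic space of curvature `−Λ`: if `h(0) = 0`,
`0 < h'(0) ≤ 1`, `h ≥ 0` and `h'' ≤ Λ·h` on `[0, R]`, then
`h(r) ≤ sinh(√Λ·r)/√Λ`. -/
theorem warping_sinh_comparison
    (Λ R : ℝ) (hΛ : 0 < Λ) (hR : 0 < R)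
    (h h' h'' : ℝ → ℝ)
    (hd1 : ∀ r ∈ Set.Icc (0 : ℝ) R, HasDerivWithinAt h (h' r) (Set.Icc (0 : ℝ) R) r)
    (hd2 : ∀ r ∈ Set.Icc (0 : ℝ) R, HasDerivWithinAt h' (h'' r) (Set.Icc (0 : ℝ) R) r)
    (hcont : ContinuousOn h'' (Set.Icc (0 : ℝ) R))
    (h0 : h 0 = 0) (h'0pos : 0 < h' 0) (h'0le : h' 0 ≤ 1)
    (hnonneg : ∀ r ∈ Set.Icc (0 : ℝ) R, 0 ≤ h r)
    (hcomp : ∀ r ∈ Set.Icc (0 : ℝ) R, h'' r ≤ Λ * h r) :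
    ∀ r ∈ Set.Icc (0 : ℝ) R, h r ≤ Real.sinh (Real.sqrt Λ * r) / Real.sqrt Λ := by
  set c := Real.sqrt Λ with hcdef
  have hcpos : 0 < c := Real.sqrt_pos.2 hΛ
  have hcne : c ≠ 0 := ne_of_gt hcpos
  have hc2 : c * c = Λ := Real.mul_self_sqrt hΛ.le
  set I := Set.Icc (0 : ℝ) R with hIdef
  have hIconv : Convex ℝ I := convex_Icc 0 R
  have h0I : (0 : ℝ) ∈ I := Set.left_mem_Icc.2 hR.le
  -- Derivatives of basic auxiliary functions
  have hlin : ∀ r : ℝ, HasDerivAt (fun y => c * y) c r := by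
    intro r
    simpa using (hasDerivAt_id r).const_mul c
  have hSinh : ∀ r : ℝ, HasDerivAt (fun y => Real.sinh (c * y) / c) (Real.cosh (c * r)) r := by
    intro r
    have := ((Real.hasDerivAt_sinh (c * r)).comp r (hlin r)).div_const c
    simpa [mul_comm, mul_div_assoc, hcne] using this
  have hCosh : ∀ r : ℝ, HasDerivAt (fun y => Real.cosh (c * y)) (c * Real.sinh (c * r)) r := by
    intro r
    have H := (Real.hasDerivAt_cosh (c * r)).comp r (hlin r)
    have H2 : HasDerivAt (fun y => Real.cosh (c * y)) (Real.sinh (c * r) * c) r := H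
    rw [mul_comm c (Real.sinh (c * r))]
    exact H2
  have hExp : ∀ (a : ℝ) (r : ℝ),
      HasDerivAt (fun y => Real.exp (a * y)) (a * Real.exp (a * r)) r := by
    intro a r
    have hl : HasDerivAt (fun y => a * y) a r := by simpa using (hasDerivAt_id r).const_mul a
    have := (Real.hasDerivAt_exp (a * r)).comp r hl
    rw [mul_comm a (Real.exp (a * r))]
    exact this
  -- D = h - sinh(c r)/c, with derivative D' = h' - cosh(c r), D'' = h'' - c sinh(c r)
  set D : ℝ → ℝ := fun r => h r - Real.sinh (c * r) / c with hDdef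
  set D' : ℝ → ℝ := fun r => h' r - Real.cosh (c * r) with hD'def
  have hDderiv : ∀ r ∈ I, HasDerivWithinAt D (D' r) I r := fun r hr =>
    (hd1 r hr).sub ((hSinh r).hasDerivWithinAt)
  have hD'deriv : ∀ r ∈ I, HasDerivWithinAt D' (h'' r - c * Real.sinh (c * r)) I r := fun r hr =>
    (hd2 r hr).sub ((hCosh r).hasDerivWithinAt)
  -- m = exp(-c r) * (D' + c D) is antitone on I
  set m : ℝ → ℝ := fun r => Real.exp (-c * r) * (D' r + c * D r) with hmdef
  have hmderiv : ∀ r ∈ I,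
      HasDerivWithinAt m (Real.exp (-c * r) * (h'' r - Λ * h r)) I r := by
    intro r hr
    have hinner : HasDerivWithinAt (fun y => D' y + c * D y)
        ((h'' r - c * Real.sinh (c * r)) + c * D' r) I r :=
      (hD'deriv r hr).add ((hDderiv r hr).const_mul c)
    have hprod : HasDerivWithinAt (fun y => Real.exp (-c * y) * (D' y + c * D y)) _ I r :=
      ((hExp (-c) r).hasDerivWithinAt).mul hinner
    convert hprod using 1
    rw [← hc2]
    simp only [hDdef, hD'def]
    field_simp
    ring
  have hmcont : ContinuousOn m I := fun r hr => ((hmderiv r hr).continuousWithinAt)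
  have hmanti : AntitoneOn m I := by
    apply antitoneOn_of_hasDerivWithinAt_nonpos hIconv hmcont
      (f' := fun r => Real.exp (-c * r) * (h'' r - Λ * h r))
    · intro x hx
      exact ((hmderiv x (interior_subset hx)).mono interior_subset)
    · intro x hx
      have hxI : x ∈ I := interior_subset hx
      have := hcomp x hxI
      have hE := Real.exp_pos (-c * x)
      nlinarith
  -- m ≤ 0 on I
  have hm0 : m 0 = h' 0 - 1 := by
    simp [hmdef, hD'def, hDdef, h0]
  have hmle : ∀ r ∈ I, m r ≤ 0 := by
    intro r hr
    have := hmanti h0I hr hr.1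
    rw [hm0] at this
    linarith
  -- E = exp(c r) * D is antitone on I, E 0 = 0, hence D ≤ 0
  set E : ℝ → ℝ := fun r => Real.exp (c * r) * D r with hEdef
  have hEderiv : ∀ r ∈ I,
      HasDerivWithinAt E (Real.exp (c * r) * (D' r + c * D r)) I r := by
    intro r hr
    have : HasDerivWithinAt (fun y => Real.exp (c * y) * D y) _ I r :=
      ((hExp c r).hasDerivWithinAt).mul (hDderiv r hr)
    convert this using 1
    ring
  have hEcont : ContinuousOn E I := fun r hr => ((hEderiv r hr).continuousWithinAt)
  have hEanti : AntitoneOn E I := by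
    apply antitoneOn_of_hasDerivWithinAt_nonpos hIconv hEcont
      (f' := fun r => Real.exp (c * r) * (D' r + c * D r))
    · intro x hx
      exact ((hEderiv x (interior_subset hx)).mono interior_subset)
    · intro x hx
      have hxI : x ∈ I := interior_subset hx
      have hmx := hmle x hxI
      have h1 : 0 < Real.exp (-c * x) := Real.exp_pos _
      have h2 : D' x + c * D x ≤ 0 := by
        by_contra hcl
        push_neg at hcl
        have : 0 < m x := mul_pos h1 hcl
        linarith
      have h3 : 0 < Real.exp (c * x) := Real.exp_pos _
      nlinarith
  have hE0 : E 0 = 0 := by simp [hEdef, hDdef, h0]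
  intro r hr
  have := hEanti h0I hr hr.1
  rw [hE0] at this
  have hEpos : 0 < Real.exp (c * r) := Real.exp_pos _
  have hD : D r ≤ 0 := by
    by_contra hcl
    push_neg at hcl
    have : 0 < E r := mul_pos hEpos hcl
    linarith
  have : h r - Real.sinh (c * r) / c ≤ 0 := hD
  linarith
end

section
/- Let Λ > 0, R > 0, and let h : [0, R] → ℝ be twice continuously differentiable with h(0) = 0, 0 < h'(0) ≤ 1, h(r) ≥ 0 and |h''(r)| ≤ Λ·h(r) for all r ∈ [0, R]. Then |h'(r) − h'(0)| ≤ cosh(√Λ·r) − 1 for all r ∈ [0, R]; in particular |h'(r) − h'(0)| ≤ Λ·r² for all sufficiently small r. -/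
open Set Real intervalIntegral

lemma sinh_le_mul_exp' {t : ℝ} (ht : 0 ≤ t) : Real.sinh t ≤ t * Real.exp t := by
  have h1 : (-(2*t)) + 1 ≤ Real.exp (-(2*t)) := Real.add_one_le_exp _
  have h2 : Real.exp (-(2*t)) = 1 / (Real.exp t)^2 := by
    rw [Real.exp_neg, two_mul, Real.exp_add]; ring
  have hu : 0 < Real.exp t := Real.exp_pos t
  rw [Real.sinh_eq, Real.exp_neg]
  rw [h2, le_div_iff₀ (by positivity : (0:ℝ) < (Real.exp t)^2)] at h1
  have hinv : (Real.exp t)⁻¹ * Real.exp t = 1 := inv_mul_cancel₀ hu.ne'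
  rw [div_le_iff₀ (by norm_num : (0:ℝ) < 2)]
  nlinarith [sq_nonneg (Real.exp t), mul_pos hu hu]

lemma cosh_sub_one_le' {x : ℝ} (hx : 0 ≤ x) (hx2 : Real.exp x ≤ 2) :
    Real.cosh x - 1 ≤ x ^ 2 := by
  have hFTC : ∫ s in (0:ℝ)..x, Real.sinh s = Real.cosh x - Real.cosh 0 :=
    intervalIntegral.integral_eq_sub_of_hasDerivAt
      (fun s _ => Real.hasDerivAt_cosh s) (Real.continuous_sinh.intervalIntegrable 0 x)
  have hmono : ∫ s in (0:ℝ)..x, Real.sinh s ≤ ∫ s in (0:ℝ)..x, Real.exp x * s := by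
    apply intervalIntegral.integral_mono_on hx
      (Real.continuous_sinh.intervalIntegrable 0 x)
      ((continuous_const.mul continuous_id).intervalIntegrable 0 x)
    intro s hs
    calc Real.sinh s ≤ s * Real.exp s := sinh_le_mul_exp' hs.1
      _ ≤ s * Real.exp x := by
          exact mul_le_mul_of_nonneg_left (Real.exp_le_exp.2 hs.2) hs.1
      _ = Real.exp x * s := mul_comm _ _
  have hint : ∫ s in (0:ℝ)..x, Real.exp x * s = Real.exp x * (x^2/2) := by
    rw [intervalIntegral.integral_const_mul, integral_id]; ring
  have h2 : Real.exp x * (x^2/2) ≤ x^2 := by nlinarith [sq_nonneg x]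
  rw [Real.cosh_zero] at hFTC
  linarith [hmono, hFTC ▸ hmono]



/-- Under the curvature bound `|h''| ≤ Λ·h` with `h(0) = 0`, `0 < h'(0) ≤ 1`, `h ≥ 0`,
the derivative of the warping function satisfies `|h'(r) − h'(0)| ≤ cosh(√Λ·r) − 1`
on `[0, R]`; in particular `|h'(r) − h'(0)| ≤ Λ·r²` for all sufficiently small `r`. -/
theorem warping_derivative_comparison
    (Λ R : ℝ) (hΛ : 0 < Λ) (hR : 0 < R)
    (h h' h'' : ℝ → ℝ)
    (hd1 : ∀ r ∈ Set.Icc (0 : ℝ) R, HasDerivWithinAt h (h' r) (Set.Icc (0 : ℝ) R) r)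
    (hd2 : ∀ r ∈ Set.Icc (0 : ℝ) R, HasDerivWithinAt h' (h'' r) (Set.Icc (0 : ℝ) R) r)
    (hcont : ContinuousOn h'' (Set.Icc (0 : ℝ) R))
    (h0 : h 0 = 0) (h'0pos : 0 < h' 0) (h'0le : h' 0 ≤ 1)
    (hnonneg : ∀ r ∈ Set.Icc (0 : ℝ) R, 0 ≤ h r)
    (hcomp : ∀ r ∈ Set.Icc (0 : ℝ) R, |h'' r| ≤ Λ * h r) :
    (∀ r ∈ Set.Icc (0 : ℝ) R, |h' r - h' 0| ≤ Real.cosh (Real.sqrt Λ * r) - 1) ∧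
    ∃ r₁ > 0, ∀ r ∈ Set.Icc (0 : ℝ) R, r ≤ r₁ → |h' r - h' 0| ≤ Λ * r ^ 2 := by
  set c := Real.sqrt Λ with hcdef
  have hc : 0 < c := Real.sqrt_pos.2 hΛ
  have hc2 : c ^ 2 = Λ := Real.sq_sqrt hΛ.le
  set φ : ℝ → ℝ := fun s => Real.sinh (c * s) / c with hφdef
  -- derivative of φ
  have hφd : ∀ x : ℝ, HasDerivAt φ (Real.cosh (c * x)) x := by
    intro x
    have h1 : HasDerivAt (fun y : ℝ => c * y) c x := by
      simpa using (hasDerivAt_id x).const_mul c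
    have h2 : HasDerivAt (fun s => Real.sinh (c * s)) (Real.cosh (c * x) * c) x := h1.sinh
    have h3 := h2.div_const c
    simpa [mul_div_assoc, mul_div_cancel_right₀ _ hc.ne'] using h3
  have hφcd : ∀ x : ℝ, HasDerivAt (fun s => Real.cosh (c * s)) (Real.sinh (c * x) * c) x := by
    intro x
    have h1 : HasDerivAt (fun y : ℝ => c * y) c x := by
      simpa using (hasDerivAt_id x).const_mul c
    exact h1.cosh
  -- the Wronskian-type function ψ
  set ψ : ℝ → ℝ := fun s => Real.cosh (c * s) * h s - φ s * h' s with hψdef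
  have hψd : ∀ x ∈ Set.Icc (0:ℝ) R,
      HasDerivWithinAt ψ (φ x * (Λ * h x - h'' x)) (Set.Icc (0:ℝ) R) x := by
    intro x hx
    have d1 := ((hφcd x).hasDerivWithinAt.mul (hd1 x hx)).sub
      ((hφd x).hasDerivWithinAt.mul (hd2 x hx))
    refine d1.congr_deriv ?_
    have : Λ = c ^ 2 := hc2.symm
    rw [this, hφdef]
    field_simp
    ring
  have hψcont : ContinuousOn ψ (Set.Icc (0:ℝ) R) :=
    fun x hx => (hψd x hx).continuousWithinAt
  have hψmono : MonotoneOn ψ (Set.Icc (0:ℝ) R) := by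
    apply monotoneOn_of_deriv_nonneg (convex_Icc 0 R) hψcont
    · intro x hx
      rw [interior_Icc] at hx
      exact ((hψd x ⟨hx.1.le, hx.2.le⟩).hasDerivAt
        (Icc_mem_nhds hx.1 hx.2)).differentiableAt.differentiableWithinAt
    · intro x hx
      rw [interior_Icc] at hx
      have hx' : x ∈ Set.Icc (0:ℝ) R := ⟨hx.1.le, hx.2.le⟩
      rw [((hψd x hx').hasDerivAt (Icc_mem_nhds hx.1 hx.2)).deriv]
      have hφnn : 0 ≤ φ x := div_nonneg
        (Real.sinh_nonneg_iff.2 (mul_nonneg hc.le hx.1.le)) hc.le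
      have hsub : 0 ≤ Λ * h x - h'' x :=
        sub_nonneg.2 ((abs_le.1 (hcomp x hx')).2)
      exact mul_nonneg hφnn hsub
  have hψ0 : ψ 0 = 0 := by simp [hψdef, hφdef, h0]
  have hψnn : ∀ x ∈ Set.Icc (0:ℝ) R, 0 ≤ ψ x := by
    intro x hx
    have := hψmono (Set.left_mem_Icc.2 hR.le) hx hx.1
    linarith [hψ0 ▸ this]
  -- key comparison: h ≤ φ on [0, R]
  have hkey : ∀ r ∈ Set.Icc (0:ℝ) R, h r ≤ φ r := by
    intro r hr
    rcases eq_or_lt_of_le hr.1 with rfl | hr0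
    · simp [hφdef, h0.symm ▸ le_refl (h 0), h0]
    · -- r > 0
      have hφpos : ∀ x : ℝ, 0 < x → 0 < φ x := fun x hx =>
        div_pos (Real.sinh_pos_iff.2 (mul_pos hc hx)) hc
      set q : ℝ → ℝ := fun s => h s / φ s with hqdef
      -- q is antitone on positive subintervals
      have hqanti : ∀ s, 0 < s → s ≤ r → q r ≤ q s := by
        intro s hs hsr
        have hnest : Set.Icc s r ⊆ Set.Icc (0:ℝ) R :=
          Set.Icc_subset_Icc hs.le hr.2
        have hD : ∀ x ∈ Set.Ioo s r, HasDerivAt q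
            ((h' x * φ x - h x * Real.cosh (c * x)) / φ x ^ 2) x := by
          intro x hx
          have hx0 : 0 < x := lt_trans hs hx.1
          have hxR : x < R := lt_of_lt_of_le hx.2 hr.2
          have hh : HasDerivAt h (h' x) x :=
            (hd1 x ⟨hx0.le, hxR.le⟩).hasDerivAt (Icc_mem_nhds hx0 hxR)
          exact hh.div (hφd x) (hφpos x hx0).ne'
        have hqc : ContinuousOn q (Set.Icc s r) := by
          apply ContinuousOn.div
          · exact fun x hx => ((hd1 x (hnest hx)).continuousWithinAt).mono hnest
          · exact (Real.continuous_sinh.comp (continuous_const.mul continuous_id)).continuousOn.div_const c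
          · exact fun x hx => (hφpos x (lt_of_lt_of_le hs hx.1)).ne'
        have hanti : AntitoneOn q (Set.Icc s r) := by
          apply antitoneOn_of_deriv_nonpos (convex_Icc s r) hqc
          · intro x hx
            rw [interior_Icc] at hx
            exact (hD x hx).differentiableAt.differentiableWithinAt
          · intro x hx
            rw [interior_Icc] at hx
            rw [(hD x hx).deriv]
            apply div_nonpos_of_nonpos_of_nonneg _ (sq_nonneg _)
            have hx0 : 0 < x := lt_trans hs hx.1
            have hψx : 0 ≤ ψ x := hψnn x ⟨hx0.le, (lt_of_lt_of_le hx.2 hr.2).le⟩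
            have : h' x * φ x - h x * Real.cosh (c * x) = -(ψ x) := by
              rw [hψdef]; ring
            rw [this]
            linarith
        exact hanti (Set.left_mem_Icc.2 hsr) (Set.right_mem_Icc.2 hsr) hsr
      -- limit of q at 0⁺ is h'(0)
      haveI hNB : (nhdsWithin (0:ℝ) (Set.Ioc 0 R)).NeBot := by
        apply mem_closure_iff_nhdsWithin_neBot.1
        rw [closure_Ioc hR.ne]
        exact ⟨le_refl 0, hR.le⟩
      have hs1 : Filter.Tendsto (fun s => h s / s)
          (nhdsWithin (0:ℝ) (Set.Ioc 0 R)) (nhds (h' 0)) := by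
        have := hasDerivWithinAt_iff_tendsto_slope.1 (hd1 0 ⟨le_refl 0, hR.le⟩)
        have hmono : nhdsWithin (0:ℝ) (Set.Ioc 0 R) ≤
            nhdsWithin (0:ℝ) (Set.Icc 0 R \ {0}) :=
          nhdsWithin_mono 0 (fun x hx => ⟨Set.Ioc_subset_Icc_self hx, ne_of_gt hx.1⟩)
        have := this.mono_left hmono
        refine this.congr (fun s => ?_)
        simp [slope_def_field, h0]
      have hs2 : Filter.Tendsto (fun s => φ s / s)
          (nhdsWithin (0:ℝ) (Set.Ioc 0 R)) (nhds 1) := by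
        have hd : HasDerivAt φ 1 0 := by simpa using hφd 0
        have := hasDerivWithinAt_iff_tendsto_slope.1
          (hd.hasDerivWithinAt (s := Set.Ioc 0 R))
        have hdiff : Set.Ioc (0:ℝ) R \ {0} = Set.Ioc 0 R := by
          apply Set.diff_singleton_eq_self
          simp
        rw [hdiff] at this
        refine this.congr (fun s => ?_)
        have hφ0 : φ 0 = 0 := by simp [hφdef]
        simp [slope_def_field, hφ0]
      have hqlim : Filter.Tendsto q (nhdsWithin (0:ℝ) (Set.Ioc 0 R)) (nhds (h' 0)) := by
        have := hs1.div hs2 one_ne_zero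
        rw [div_one] at this
        apply this.congr'
        filter_upwards [self_mem_nhdsWithin] with s hs
        have hs0 : s ≠ 0 := ne_of_gt hs.1
        have hφs : φ s ≠ 0 := (hφpos s hs.1).ne'
        show h s / s / (φ s / s) = h s / φ s
        rw [div_div_div_cancel_right₀ hs0]
      have hqr : q r ≤ h' 0 := by
        apply ge_of_tendsto hqlim
        filter_upwards [mem_nhdsWithin_of_mem_nhds (gt_mem_nhds hr0),
          self_mem_nhdsWithin] with s hsr hs
        exact hqanti s hs.1 hsr.le
      have hφr : 0 < φ r := hφpos r hr0
      have : h r / φ r ≤ 1 := le_trans hqr h'0le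
      calc h r = (h r / φ r) * φ r := (div_mul_cancel₀ _ hφr.ne').symm
        _ ≤ 1 * φ r := mul_le_mul_of_nonneg_right this hφr.le
        _ = φ r := one_mul _
  -- main estimate
  have main : ∀ r ∈ Set.Icc (0:ℝ) R, |h' r - h' 0| ≤ Real.cosh (c * r) - 1 := by
    intro r hr
    rcases eq_or_lt_of_le hr.1 with rfl | hr0
    · simp
    · have hsub : Set.Icc (0:ℝ) r ⊆ Set.Icc (0:ℝ) R := Set.Icc_subset_Icc le_rfl hr.2
      have h'cont : ContinuousOn h' (Set.Icc (0:ℝ) r) :=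
        fun x hx => ((hd2 x (hsub hx)).continuousWithinAt).mono hsub
      have hderiv : ∀ x ∈ Set.Ioo (0:ℝ) r, HasDerivWithinAt h' (h'' x) (Set.Ioi x) x := by
        intro x hx
        have hxR : x < R := lt_of_lt_of_le hx.2 hr.2
        exact ((hd2 x ⟨hx.1.le, hxR.le⟩).hasDerivAt
          (Icc_mem_nhds hx.1 hxR)).hasDerivWithinAt
      have h''int : IntervalIntegrable h'' MeasureTheory.volume 0 r :=
        (hcont.mono hsub).intervalIntegrable_of_Icc hr.1
      have heq : ∫ s in (0:ℝ)..r, h'' s = h' r - h' 0 :=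
        intervalIntegral.integral_eq_sub_of_hasDeriv_right_of_le hr.1 h'cont hderiv h''int
      have habs : |∫ s in (0:ℝ)..r, h'' s| ≤ ∫ s in (0:ℝ)..r, |h'' s| :=
        intervalIntegral.abs_integral_le_integral_abs hr.1
      have habint : IntervalIntegrable (fun s => |h'' s|) MeasureTheory.volume 0 r :=
        ((hcont.mono hsub).abs).intervalIntegrable_of_Icc hr.1
      have hgint : IntervalIntegrable (fun s => c * Real.sinh (c * s))
          MeasureTheory.volume 0 r :=
        (continuous_const.mul
          (Real.continuous_sinh.comp (continuous_const.mul continuous_id))).intervalIntegrable 0 r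
      have hmono2 : ∫ s in (0:ℝ)..r, |h'' s| ≤ ∫ s in (0:ℝ)..r, c * Real.sinh (c * s) := by
        apply intervalIntegral.integral_mono_on hr.1 habint hgint
        intro s hs
        have hsR : s ∈ Set.Icc (0:ℝ) R := hsub hs
        calc |h'' s| ≤ Λ * h s := hcomp s hsR
          _ ≤ Λ * φ s := mul_le_mul_of_nonneg_left (hkey s hsR) hΛ.le
          _ = c * Real.sinh (c * s) := by
              rw [hφdef, ← hc2]; field_simp
      have hFTC : ∫ s in (0:ℝ)..r, c * Real.sinh (c * s)
          = Real.cosh (c * r) - Real.cosh (c * 0) := by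
        apply intervalIntegral.integral_eq_sub_of_hasDerivAt
        · intro x _
          simpa [mul_comm] using hφcd x
        · exact hgint
      rw [heq] at habs
      rw [hFTC] at hmono2
      have : Real.cosh (c * 0) = 1 := by simp
      rw [this] at hmono2
      linarith
  refine ⟨main, Real.log 2 / c, div_pos (Real.log_pos one_lt_two) hc, ?_⟩
  intro r hr hr1
  have h1 := main r hr
  have hcr : 0 ≤ c * r := mul_nonneg hc.le hr.1
  have hcr2 : c * r ≤ Real.log 2 := by
    rw [le_div_iff₀ hc] at hr1
    linarith [hr1]
  have hexp : Real.exp (c * r) ≤ 2 := by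
    calc Real.exp (c * r) ≤ Real.exp (Real.log 2) := Real.exp_le_exp.2 hcr2
      _ = 2 := Real.exp_log two_pos
  have h2 := cosh_sub_one_le' hcr hexp
  have : (c * r) ^ 2 = Λ * r ^ 2 := by rw [mul_pow, hc2]
  linarith [this ▸ h2]
end
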